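/- Let n = c·ℓ with c ≥ 1, ℓ ≥ 1, and let loc : {0,…,n−1} → {0,…,ℓ−1} be such that on each group of ℓ consecutive workers {gℓ,…,(g+1)ℓ−1} (0 ≤ g ≤ c−1) the function loc takes every value in {0,…,ℓ−1} exactly once. Let τ ≥ 1 with τ ≤ n, set c₁ = ⌊(τ−1)/c⌋, c₂ = (τ−1) − c·c₁, and Q_ub = n(ℓ−1)/2 + c·Σ_{i=0}^{c₁−1}(ℓ−i) + c₂·(ℓ−c₁) + 1. Then every computation profile t with Σ_{w=0}^{n−1} t(w) ≥ Q_ub satisfies A(t) ≥ τ, i.e., the class is processed by at least τ distinct workers. -/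

import Mathlib

open Finset

private lemma sum_range_mul_eq (f : ℕ → ℕ) (c ℓ : ℕ) :
    ∑ w ∈ range (c * ℓ), f w = ∑ g ∈ range c, ∑ i ∈ range ℓ, f (g * ℓ + i) := by
  induction c with
  | zero => simp
  | succ c ih =>
    rw [Finset.sum_range_succ, ← ih, Nat.succ_mul, Finset.sum_range_add]

private lemma group_sum (ℓ : ℕ) (f : ℕ → ℕ) (hf : ∀ i < ℓ, f i < ℓ)
    (huniq : ∀ v < ℓ, ∃! i, i < ℓ ∧ f i = v) :
    ∑ i ∈ range ℓ, f i = ∑ v ∈ range ℓ, v := by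
  have hinj : ∀ x ∈ range ℓ, ∀ y ∈ range ℓ, f x = f y → x = y := by
    intro i₁ h₁ i₂ h₂ he
    simp only [mem_range] at h₁ h₂
    obtain ⟨j, hj, hu⟩ := huniq (f i₁) (hf _ h₁)
    rw [hu i₁ ⟨h₁, rfl⟩, hu i₂ ⟨h₂, he.symm⟩]
  have himg : (range ℓ).image f = range ℓ := by
    apply Finset.eq_of_subset_of_card_le
    · intro v hv
      simp only [mem_image, mem_range] at hv ⊢
      obtain ⟨i, hi, rfl⟩ := hv; exact hf i hi
    · rw [Finset.card_image_of_injOn (fun x hx y hy => hinj x hx y hy)]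
  conv_rhs => rw [← himg]
  rw [Finset.sum_image hinj]

private lemma min_sum_eq (c ℓ m c₁ c₂ : ℕ) (hc : 0 < c) (hc₁ : c₁ = m / c)
    (hc₂ : c₂ = m - c * c₁) (hlt : c₁ < ℓ) :
    ∑ i ∈ range ℓ, min m (c * (ℓ - i)) = c * ∑ i ∈ range c₁, (ℓ - i) + c₂ * (ℓ - c₁) := by
  have hdm := Nat.div_add_mod m c
  have hml := Nat.mod_lt m hc
  have hm : m = c * c₁ + c₂ ∧ c₂ < c := by subst hc₁; omega
  obtain ⟨a, ha⟩ : ∃ a, ℓ = a + c₁ := ⟨ℓ - c₁, by omega⟩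
  have ha1 : 1 ≤ a := by omega
  subst ha
  rw [Finset.sum_range_add]
  have h1 : ∑ i ∈ range a, min m (c * (a + c₁ - i)) = a * m := by
    rw [Finset.sum_congr rfl (fun i hi => ?_), Finset.sum_const, card_range, smul_eq_mul]
    simp only [mem_range] at hi
    have hle : c₁ + 1 ≤ a + c₁ - i := by omega
    have h2 := Nat.mul_le_mul_left c hle
    have hexp : c * (c₁ + 1) = c * c₁ + c := by ring
    omega
  have h2 : ∑ i ∈ range c₁, min m (c * (a + c₁ - (a + i))) = c * ∑ i ∈ range c₁, (c₁ - i) := by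
    rw [Finset.mul_sum]
    refine Finset.sum_congr rfl (fun i hi => ?_)
    simp only [mem_range] at hi
    have he : a + c₁ - (a + i) = c₁ - i := by omega
    rw [he]
    have hle : c₁ - i ≤ c₁ := by omega
    have := Nat.mul_le_mul_left c hle
    omega
  rw [h1, h2]
  have h3 : ∑ i ∈ range c₁, (a + c₁ - i) = c₁ * a + ∑ i ∈ range c₁, (c₁ - i) := by
    rw [Finset.sum_congr rfl (fun i hi => show a + c₁ - i = a + (c₁ - i) by
          simp only [mem_range] at hi; omega),
        Finset.sum_add_distrib, Finset.sum_const, card_range, smul_eq_mul, mul_comm]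
  rw [h3, Nat.add_sub_cancel, hm.1]
  ring

private lemma card_loc_lt (c ℓ n : ℕ) (hl : 1 ≤ ℓ) (hn : n = c * ℓ)
    (loc : ℕ → ℕ) (hloc : ∀ w < n, loc w < ℓ)
    (hgroup : ∀ g < c, ∀ v < ℓ, ∃! i, i < ℓ ∧ loc (g * ℓ + i) = v)
    (b : ℕ) :
    ((range n).filter (fun w => loc w < b)).card ≤ c * b := by
  have hcomm : c * ℓ = ℓ * c := Nat.mul_comm c ℓ
  have key : ((range n).filter fun w => loc w < b).card ≤ (range c ×ˢ range b).card := by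
    apply Finset.card_le_card_of_injOn (fun w => (w / ℓ, loc w))
    · intro w hw
      simp only [Finset.mem_coe, mem_filter, mem_range] at hw
      simp only [Finset.mem_coe, mem_product, mem_range]
      exact ⟨Nat.div_lt_of_lt_mul (by omega), hw.2⟩
    · intro w₁ h₁ w₂ h₂ heq
      simp only [coe_filter, Set.mem_setOf_eq, mem_range] at h₁ h₂
      have hdiv : w₁ / ℓ = w₂ / ℓ := congrArg Prod.fst heq
      have hlv : loc w₁ = loc w₂ := congrArg Prod.snd heq
      have hg : w₁ / ℓ < c := Nat.div_lt_of_lt_mul (by omega)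
      obtain ⟨j, hj, hu⟩ := hgroup (w₁ / ℓ) hg (loc w₁) (hloc w₁ h₁.1)
      have hmod : w₁ / ℓ * ℓ + w₁ % ℓ = w₁ := Nat.div_add_mod' w₁ ℓ
      have hmod2 : w₂ / ℓ * ℓ + w₂ % ℓ = w₂ := Nat.div_add_mod' w₂ ℓ
      have e₁ : w₁ % ℓ = j := hu (w₁ % ℓ) ⟨Nat.mod_lt _ (by omega), by rw [hmod]⟩
      have e₂ : w₂ % ℓ = j := hu (w₂ % ℓ) ⟨Nat.mod_lt _ (by omega),
        by rw [hdiv, hmod2]; exact hlv.symm⟩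
      rw [hdiv] at hmod
      omega
  simpa using key

theorem stmt1 (c ℓ n : ℕ) (hc : 1 ≤ c) (hl : 1 ≤ ℓ) (hn : n = c * ℓ)
    (loc : ℕ → ℕ) (hloc : ∀ w < n, loc w < ℓ)
    (hgroup : ∀ g < c, ∀ v < ℓ, ∃! i, i < ℓ ∧ loc (g * ℓ + i) = v)
    (τ : ℕ) (hτ : 1 ≤ τ) (hτn : τ ≤ n)
    (c₁ c₂ Qub : ℕ) (hc₁ : c₁ = (τ - 1) / c) (hc₂ : c₂ = (τ - 1) - c * c₁)
    (hQub : Qub = n * (ℓ - 1) / 2 + c * ∑ i ∈ Finset.range c₁, (ℓ - i)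
        + c₂ * (ℓ - c₁) + 1)
    (t : ℕ → ℕ) (ht : ∀ w < n, t w ≤ ℓ)
    (hsum : Qub ≤ ∑ w ∈ Finset.range n, t w) :
    τ ≤ ((Finset.range n).filter (fun w => loc w < t w)).card := by
  by_contra hcon
  push_neg at hcon
  set X := (range n).filter (fun w => loc w < t w) with hX
  have hXsub : X ⊆ range n := filter_subset _ _
  have hXcard : X.card ≤ τ - 1 := by omega
  -- Step 1: bound the total by Σ loc + Σ_X (ℓ - loc)
  have h1 : ∑ w ∈ range n, t w ≤ ∑ w ∈ range n, loc w + ∑ w ∈ X, (ℓ - loc w) := by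
    rw [hX, Finset.sum_filter, ← Finset.sum_add_distrib]
    apply Finset.sum_le_sum
    intro w hw
    rw [mem_range] at hw
    have h1 := ht w hw
    have h2 := hloc w hw
    by_cases h : loc w < t w
    · simp only [h, if_true]; omega
    · simp only [h, if_false]; omega
  -- Step 2: Σ loc = n (ℓ-1)/2
  have h2 : ∑ w ∈ range n, loc w = n * (ℓ - 1) / 2 := by
    have hgs : ∀ g ∈ range c, ∑ i ∈ range ℓ, loc (g * ℓ + i) = ∑ v ∈ range ℓ, v := by
      intro g hg
      rw [mem_range] at hg
      refine group_sum ℓ _ (fun i hi => hloc _ ?_) (hgroup g hg)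
      have : g + 1 ≤ c := hg
      have := Nat.mul_le_mul_right ℓ this
      have hexp : (g + 1) * ℓ = g * ℓ + ℓ := by ring
      omega
    have htwo : (∑ w ∈ range n, loc w) * 2 = n * (ℓ - 1) := by
      rw [hn, sum_range_mul_eq, Finset.sum_congr rfl hgs, Finset.sum_const, card_range,
        smul_eq_mul, mul_assoc, Finset.sum_range_id_mul_two, ← mul_assoc]
    omega
  -- Step 3: layer-cake bound on Σ_X (ℓ - loc)
  have h3 : ∑ w ∈ X, (ℓ - loc w) ≤ c * ∑ i ∈ Finset.range c₁, (ℓ - i) + c₂ * (ℓ - c₁) := by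
    have hstep : ∑ w ∈ X, (ℓ - loc w)
        = ∑ i ∈ range ℓ, (X.filter (fun w => loc w + i < ℓ)).card := by
      have hlc : ∀ w ∈ X, ℓ - loc w = ∑ i ∈ range ℓ, if loc w + i < ℓ then 1 else 0 := by
        intro w hw
        have hw' : loc w < ℓ := hloc w (mem_range.mp (hXsub hw))
        rw [← Finset.card_filter]
        have : (range ℓ).filter (fun i => loc w + i < ℓ) = range (ℓ - loc w) := by
          ext i; simp only [mem_filter, mem_range]; omega
        rw [this, card_range]
      rw [Finset.sum_congr rfl hlc, Finset.sum_comm]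
      exact Finset.sum_congr rfl (fun i _ => (Finset.card_filter _ _).symm)
    rw [hstep]
    have hbound : ∀ i ∈ range ℓ,
        (X.filter (fun w => loc w + i < ℓ)).card ≤ min (τ - 1) (c * (ℓ - i)) := by
      intro i _
      refine le_min (le_trans (Finset.card_filter_le _ _) hXcard) ?_
      refine le_trans (Finset.card_le_card (fun w hw => ?_))
        (card_loc_lt c ℓ n hl hn loc hloc hgroup (ℓ - i))
      simp only [mem_filter] at hw
      simp only [mem_filter, mem_range]
      have := hXsub hw.1
      rw [mem_range] at this
      exact ⟨this, by omega⟩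
    refine le_trans (Finset.sum_le_sum hbound) (le_of_eq ?_)
    have hc₁lt : c₁ < ℓ := by
      rw [hc₁]
      rw [Nat.div_lt_iff_lt_mul (by omega)]
      have : ℓ * c = c * ℓ := Nat.mul_comm ℓ c
      omega
    exact min_sum_eq c ℓ (τ - 1) c₁ c₂ (by omega) hc₁ hc₂ hc₁lt
  have hfin : ∑ w ∈ range n, t w < Qub := by
    calc ∑ w ∈ range n, t w
        ≤ ∑ w ∈ range n, loc w + ∑ w ∈ X, (ℓ - loc w) := h1
      _ ≤ n * (ℓ - 1) / 2 + (c * ∑ i ∈ Finset.range c₁, (ℓ - i) + c₂ * (ℓ - c₁)) := by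
          rw [h2]; exact Nat.add_le_add_left h3 _
      _ < Qub := by rw [hQub]; exact Nat.lt_succ_of_le (Nat.add_assoc _ _ _).ge
  omega
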